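/- In A(SU_q(3)), set z_j := u³_j and z_j^∗ := (u³_j)^∗ (the quantum minors) for j = 1, 2, 3. Then the following relations of the quantum 5-sphere hold: z_i z_j = q z_j z_i for i < j; z_i^∗ z_j = q z_j z_i^∗ for all i ≠ j; z₁^∗ z₁ = z₁ z₁^∗; z₂^∗ z₂ − z₂ z₂^∗ = (1 − q²) z₁ z₁^∗; and z₃^∗ z₃ − z₃ z₃^∗ = (1 − q²)(z₁ z₁^∗ + z₂ z₂^∗). (These are the defining relations of the ∗-algebra A(S⁵_q), verified for its generators z_j = u³_j inside A(SU_q(3)).) -/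
import Mathlib


/-- The generator `u^i_j` of the free algebra on nine letters. -/
noncomputable def ugen (i j : Fin 3) : FreeAlgebra ℂ (Fin 3 × Fin 3) :=
  FreeAlgebra.ι ℂ (i, j)

/-- The number of inversions (the length) of a permutation of `{1,2,3}`. -/
def invCount (σ : Equiv.Perm (Fin 3)) : ℕ :=
  (Finset.univ.filter fun p : Fin 3 × Fin 3 => p.1 < p.2 ∧ σ p.2 < σ p.1).card

/-- The defining relations of the coordinate algebra `A(SU_q(3))`. -/
inductive SURel (q : ℂ) : FreeAlgebra ℂ (Fin 3 × Fin 3) → FreeAlgebra ℂ (Fin 3 × Fin 3) → Prop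
  | col (i j k : Fin 3) (h : i < j) :
      SURel q (ugen i k * ugen j k) (q • (ugen j k * ugen i k))
  | row (i j k : Fin 3) (h : i < j) :
      SURel q (ugen k i * ugen k j) (q • (ugen k j * ugen k i))
  | comm (i j k l : Fin 3) (hij : i < j) (hkl : k < l) :
      SURel q (ugen i l * ugen j k) (ugen j k * ugen i l)
  | qcomm (i j k l : Fin 3) (hij : i < j) (hkl : k < l) :
      SURel q (ugen i k * ugen j l - ugen j l * ugen i k)
        ((q - q⁻¹) • (ugen i l * ugen j k))
  | det :
      SURel q
        (∑ σ : Equiv.Perm (Fin 3),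
          ((-q) ^ invCount σ) • (ugen 0 (σ 0) * ugen 1 (σ 1) * ugen 2 (σ 2))) 1

/-- The coordinate algebra `A(SU_q(3))`. -/
abbrev SUq3 (q : ℂ) := RingQuot (SURel q)

/-- The ordered pair of elements of `{0,1,2}` complementary to `i`. -/
def compl3 (i : Fin 3) : Fin 3 × Fin 3 :=
  if i = 0 then (1, 2) else if i = 1 then (0, 2) else (0, 1)

/-- The quantum minor `(u^i_j)^∗ = (−q)^{j−i}(u^{k₁}_{l₁} u^{k₂}_{l₂} − q u^{k₁}_{l₂} u^{k₂}_{l₁})`,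
where `{k₁ < k₂} = {1,2,3} \ {i}` and `{l₁ < l₂} = {1,2,3} \ {j}`. -/
noncomputable def uminor (q : ℂ) (i j : Fin 3) : FreeAlgebra ℂ (Fin 3 × Fin 3) :=
  ((-q) ^ ((j : ℤ) - (i : ℤ))) •
    (ugen (compl3 i).1 (compl3 j).1 * ugen (compl3 i).2 (compl3 j).2 -
      q • (ugen (compl3 i).1 (compl3 j).2 * ugen (compl3 i).2 (compl3 j).1))

/-! ### Auxiliary abstract lemmas -/

section abstractPatterns
variable {A : Type*} [Ring A] [Algebra ℂ A] (q : ℂ)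

lemma patA (a b c d e : A)
    (hb : b * e = e * b) (ha : a * e = q • (e * a))
    (hd : d * e = q • (e * d)) (hc : c * e = e * c) :
    (a * b - q • (c * d)) * e = q • (e * (a * b - q • (c * d))) := by
  have h1 : a * b * e = q • (e * (a * b)) := by
    rw [mul_assoc, hb, ← mul_assoc, ha, smul_mul_assoc, mul_assoc]
  have h2 : c * d * e = q • (e * (c * d)) := by
    rw [mul_assoc, hd, mul_smul_comm, ← mul_assoc, hc, mul_assoc]
  rw [sub_mul, smul_mul_assoc, h1, h2]
  simp only [mul_sub, mul_smul_comm, smul_sub, smul_smul]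

lemma patC (a b c d e : A)
    (hb : b * e = e * b) (ha : a * e = e * a)
    (hd : d * e = e * d) (hc : c * e = e * c) :
    (a * b - q • (c * d)) * e = e * (a * b - q • (c * d)) := by
  have h1 : a * b * e = e * (a * b) := by
    rw [mul_assoc, hb, ← mul_assoc, ha, mul_assoc]
  have h2 : c * d * e = e * (c * d) := by
    rw [mul_assoc, hd, ← mul_assoc, hc, mul_assoc]
  rw [sub_mul, smul_mul_assoc, h1, h2]
  simp only [mul_sub, mul_smul_comm]

lemma patB (a b c d e g : A)
    (hb : b * e = q • (e * b)) (ha : a * e = e * a + (q - q⁻¹) • (c * g))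
    (hd : d * e = e * d + (q - q⁻¹) • (b * g)) (hc : c * e = q • (e * c))
    (hg : g * b = b * g) :
    (a * b - q • (c * d)) * e = q • (e * (a * b - q • (c * d))) := by
  have h1 : a * b * e = q • (e * (a * b)) + (q * (q - q⁻¹)) • (c * (g * b)) := by
    rw [mul_assoc, hb, mul_smul_comm, ← mul_assoc, ha, add_mul, smul_mul_assoc,
      mul_assoc c g b, smul_add, smul_smul, mul_assoc]
  have h2 : c * d * e = q • (e * (c * d)) + (q - q⁻¹) • (c * (b * g)) := by
    rw [mul_assoc, hd, mul_add, mul_smul_comm, ← mul_assoc, hc, smul_mul_assoc,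
      mul_assoc]
  rw [sub_mul, smul_mul_assoc, h1, h2, hg]
  simp only [mul_sub, mul_smul_comm, smul_sub, smul_add, smul_smul]
  match_scalars <;> ring

lemma patD (a b c d e g a₂ d₂ : A)
    (hb : b * e = e * b) (ha : a * e = e * a + (q - q⁻¹) • (a₂ * g))
    (hd : d * e = e * d + (q - q⁻¹) • (d₂ * g)) (hc : c * e = e * c)
    (hg : g * b = b * g) :
    (a * b - q • (c * d)) * e - e * (a * b - q • (c * d))
      = (q - q⁻¹) • ((a₂ * b - q • (c * d₂)) * g) := by
  have h1 : a * b * e = e * (a * b) + (q - q⁻¹) • (a₂ * (b * g)) := by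
    rw [mul_assoc, hb, ← mul_assoc, ha, add_mul, smul_mul_assoc, mul_assoc a₂ g b, hg,
      mul_assoc]
  have h2 : c * d * e = e * (c * d) + (q - q⁻¹) • (c * (d₂ * g)) := by
    rw [mul_assoc, hd, mul_add, mul_smul_comm, ← mul_assoc, hc, mul_assoc]
  rw [sub_mul, smul_mul_assoc, h1, h2]
  simp only [mul_sub, mul_smul_comm, smul_sub, smul_add, smul_smul, sub_mul, smul_mul_assoc,
    mul_assoc]
  match_scalars <;> ring

lemma patE (hq : q ≠ 0) (a b c d e g₁ g₂ b₂ c₂ : A)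
    (hb : b * e = e * b + (q - q⁻¹) • (b₂ * g₂))
    (ha : a * e = e * a + (q - q⁻¹) • (c₂ * g₁))
    (hd : d * e = e * d + (q - q⁻¹) • (b₂ * g₁))
    (hc : c * e = e * c + (q - q⁻¹) • (c₂ * g₂))
    (hag2 : a * g₂ = g₂ * a + (q - q⁻¹) • (c * g₁))
    (hb2g2 : b₂ * g₂ = g₂ * b₂) (hc2g1 : c₂ * g₁ = g₁ * c₂)
    (hc2g2 : c₂ * g₂ = g₂ * c₂) (hb2g1 : b₂ * g₁ = g₁ * b₂)
    (hcg1 : c * g₁ = g₁ * c) :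
    (a * b - q • (c * d)) * e - e * (a * b - q • (c * d))
      = (q - q⁻¹) • (g₂ * (a * b₂ - q • (c₂ * d)) - q⁻¹ • (g₁ * (c * b₂ - q • (c₂ * b)))) := by
  set r := q - q⁻¹ with hr
  have k1 : a * (e * b) = e * (a * b) + r • (g₁ * (c₂ * b)) := by
    rw [← mul_assoc, ha, add_mul, smul_mul_assoc, hc2g1, mul_assoc e a b, mul_assoc g₁ c₂ b]
  have k2 : a * (b₂ * g₂) = g₂ * (a * b₂) + r • (g₁ * (c * b₂)) := by
    rw [hb2g2, ← mul_assoc, hag2, add_mul, smul_mul_assoc, hcg1, mul_assoc g₂, mul_assoc g₁]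
  have h1 : a * b * e
      = e * (a * b) + r • (g₁ * (c₂ * b)) + (r • (g₂ * (a * b₂)) + (r * r) • (g₁ * (c * b₂))) := by
    rw [mul_assoc, hb, mul_add, mul_smul_comm, k1, k2, smul_add, smul_smul]
  have k3 : c * (e * d) = e * (c * d) + r • (g₂ * (c₂ * d)) := by
    rw [← mul_assoc, hc, add_mul, smul_mul_assoc, hc2g2, mul_assoc e, mul_assoc g₂]
  have k4 : c * (b₂ * g₁) = g₁ * (c * b₂) := by
    rw [hb2g1, ← mul_assoc, hcg1, mul_assoc]
  have h2 : c * d * e = e * (c * d) + r • (g₂ * (c₂ * d)) + r • (g₁ * (c * b₂)) := by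
    rw [mul_assoc, hd, mul_add, mul_smul_comm, k3, k4]
  rw [sub_mul, smul_mul_assoc, h1, h2]
  simp only [mul_sub, mul_smul_comm, smul_sub, smul_add, smul_smul, hr]
  match_scalars <;> field_simp <;> ring

end abstractPatterns

/-! ### The generators in the quotient and the defining relations there -/

/-- The image of the generator `u^i_j` in `A(SU_q(3))`. -/
noncomputable def UG (q : ℂ) (i j : Fin 3) : SUq3 q :=
  RingQuot.mkAlgHom ℂ (SURel q) (ugen i j)

section relations
variable (q : ℂ)

lemma UG_col (i j k : Fin 3) (h : i < j) :
    UG q i k * UG q j k = q • (UG q j k * UG q i k) := by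
  have := RingQuot.mkAlgHom_rel ℂ (SURel.col (q := q) i j k h)
  simpa [UG, map_mul, map_smul] using this

lemma UG_row (i j k : Fin 3) (h : i < j) :
    UG q k i * UG q k j = q • (UG q k j * UG q k i) := by
  have := RingQuot.mkAlgHom_rel ℂ (SURel.row (q := q) i j k h)
  simpa [UG, map_mul, map_smul] using this

lemma UG_comm (i j k l : Fin 3) (hij : i < j) (hkl : k < l) :
    UG q i l * UG q j k = UG q j k * UG q i l := by
  have := RingQuot.mkAlgHom_rel ℂ (SURel.comm (q := q) i j k l hij hkl)
  simpa [UG, map_mul] using this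

lemma UG_qcomm (i j k l : Fin 3) (hij : i < j) (hkl : k < l) :
    UG q i k * UG q j l = UG q j l * UG q i k + (q - q⁻¹) • (UG q i l * UG q j k) := by
  have := RingQuot.mkAlgHom_rel ℂ (SURel.qcomm (q := q) i j k l hij hkl)
  simp only [map_sub, map_mul, map_smul] at this
  rw [sub_eq_iff_eq_add'] at this
  simpa [UG] using this

lemma UG_minor (j : Fin 3) :
    RingQuot.mkAlgHom ℂ (SURel q) (uminor q 2 j)
      = ((-q) ^ ((j : ℤ) - 2)) •
        (UG q 0 (compl3 j).1 * UG q 1 (compl3 j).2 -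
          q • (UG q 0 (compl3 j).2 * UG q 1 (compl3 j).1)) := by
  have h2 : compl3 2 = (0, 1) := by decide
  have hv : ((2 : Fin 3) : ℤ) = 2 := by decide
  rw [uminor, h2, hv]
  simp [UG, map_smul, map_sub, map_mul]

end relations

/-- With `z_j := u³_j` and `z_j^∗ := (u³_j)^∗` (the quantum minors) inside
`A(SU_q(3))`, the defining relations of the quantum 5-sphere hold:
`z_i z_j = q z_j z_i` for `i < j`; `z_i^∗ z_j = q z_j z_i^∗` for `i ≠ j`;
`z₁^∗ z₁ = z₁ z₁^∗`; `z₂^∗ z₂ − z₂ z₂^∗ = (1 − q²) z₁ z₁^∗`; and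
`z₃^∗ z₃ − z₃ z₃^∗ = (1 − q²)(z₁ z₁^∗ + z₂ z₂^∗)`. -/
theorem stmt_7 (q : ℝ) (hq0 : 0 < q) (hq1 : q < 1)
    (z zs : Fin 3 → SUq3 (q : ℂ))
    (hz : ∀ j, z j = RingQuot.mkAlgHom ℂ (SURel (q : ℂ)) (ugen 2 j))
    (hzs : ∀ j, zs j = RingQuot.mkAlgHom ℂ (SURel (q : ℂ)) (uminor (q : ℂ) 2 j)) :
    (∀ i j : Fin 3, i < j → z i * z j = (q : ℂ) • (z j * z i)) ∧
    (∀ i j : Fin 3, i ≠ j → zs i * z j = (q : ℂ) • (z j * zs i)) ∧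
    zs 0 * z 0 = z 0 * zs 0 ∧
    zs 1 * z 1 - z 1 * zs 1 = (1 - (q : ℂ) ^ 2) • (z 0 * zs 0) ∧
    zs 2 * z 2 - z 2 * zs 2 = (1 - (q : ℂ) ^ 2) • (z 0 * zs 0 + z 1 * zs 1) := by
  have hQ : (q : ℂ) ≠ 0 := by
    simp only [ne_eq, Complex.ofReal_eq_zero]
    exact ne_of_gt hq0
  have hz' : ∀ j, z j = UG ((q:ℂ)) 2 j := hz
  -- the minors, expanded
  have ezs0 : zs 0 = (((q:ℂ))^2)⁻¹ •
      (UG ((q:ℂ)) 0 1 * UG ((q:ℂ)) 1 2 - ((q:ℂ)) • (UG ((q:ℂ)) 0 2 * UG ((q:ℂ)) 1 1)) := by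
    rw [hzs 0, UG_minor, show compl3 0 = ((1:Fin 3), (2:Fin 3)) from by decide]
    norm_num [zpow_two, neg_mul_neg, sq]
  have ezs1 : zs 1 = (-(((q:ℂ))⁻¹)) •
      (UG ((q:ℂ)) 0 0 * UG ((q:ℂ)) 1 2 - ((q:ℂ)) • (UG ((q:ℂ)) 0 2 * UG ((q:ℂ)) 1 0)) := by
    rw [hzs 1, UG_minor, show compl3 1 = ((0:Fin 3), (2:Fin 3)) from by decide]
    norm_num [inv_neg]
  have ezs2 : zs 2 = (UG ((q:ℂ)) 0 0 * UG ((q:ℂ)) 1 1 - ((q:ℂ)) • (UG ((q:ℂ)) 0 1 * UG ((q:ℂ)) 1 0)) := by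
    rw [hzs 2, UG_minor, show compl3 2 = ((0:Fin 3), (1:Fin 3)) from by decide]
    norm_num
  -- the six key commutation identities
  have key01 : (UG ((q:ℂ)) 0 1 * UG ((q:ℂ)) 1 2 - ((q:ℂ)) • (UG ((q:ℂ)) 0 2 * UG ((q:ℂ)) 1 1)) * UG ((q:ℂ)) 2 1
      = ((q:ℂ)) • (UG ((q:ℂ)) 2 1 * (UG ((q:ℂ)) 0 1 * UG ((q:ℂ)) 1 2 - ((q:ℂ)) • (UG ((q:ℂ)) 0 2 * UG ((q:ℂ)) 1 1))) :=
    patA ((q:ℂ)) _ _ _ _ _ (UG_comm ((q:ℂ)) 1 2 1 2 (by decide) (by decide))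
      (UG_col ((q:ℂ)) 0 2 1 (by decide)) (UG_col ((q:ℂ)) 1 2 1 (by decide))
      (UG_comm ((q:ℂ)) 0 2 1 2 (by decide) (by decide))
  have key02 : (UG ((q:ℂ)) 0 1 * UG ((q:ℂ)) 1 2 - ((q:ℂ)) • (UG ((q:ℂ)) 0 2 * UG ((q:ℂ)) 1 1)) * UG ((q:ℂ)) 2 2
      = ((q:ℂ)) • (UG ((q:ℂ)) 2 2 * (UG ((q:ℂ)) 0 1 * UG ((q:ℂ)) 1 2 - ((q:ℂ)) • (UG ((q:ℂ)) 0 2 * UG ((q:ℂ)) 1 1))) :=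
    patB ((q:ℂ)) _ _ _ _ _ _ (UG_col ((q:ℂ)) 1 2 2 (by decide))
      (UG_qcomm ((q:ℂ)) 0 2 1 2 (by decide) (by decide))
      (UG_qcomm ((q:ℂ)) 1 2 1 2 (by decide) (by decide))
      (UG_col ((q:ℂ)) 0 2 2 (by decide))
      (UG_comm ((q:ℂ)) 1 2 1 2 (by decide) (by decide)).symm
  have key10 : (UG ((q:ℂ)) 0 0 * UG ((q:ℂ)) 1 2 - ((q:ℂ)) • (UG ((q:ℂ)) 0 2 * UG ((q:ℂ)) 1 0)) * UG ((q:ℂ)) 2 0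
      = ((q:ℂ)) • (UG ((q:ℂ)) 2 0 * (UG ((q:ℂ)) 0 0 * UG ((q:ℂ)) 1 2 - ((q:ℂ)) • (UG ((q:ℂ)) 0 2 * UG ((q:ℂ)) 1 0))) :=
    patA ((q:ℂ)) _ _ _ _ _ (UG_comm ((q:ℂ)) 1 2 0 2 (by decide) (by decide))
      (UG_col ((q:ℂ)) 0 2 0 (by decide)) (UG_col ((q:ℂ)) 1 2 0 (by decide))
      (UG_comm ((q:ℂ)) 0 2 0 2 (by decide) (by decide))
  have key12 : (UG ((q:ℂ)) 0 0 * UG ((q:ℂ)) 1 2 - ((q:ℂ)) • (UG ((q:ℂ)) 0 2 * UG ((q:ℂ)) 1 0)) * UG ((q:ℂ)) 2 2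
      = ((q:ℂ)) • (UG ((q:ℂ)) 2 2 * (UG ((q:ℂ)) 0 0 * UG ((q:ℂ)) 1 2 - ((q:ℂ)) • (UG ((q:ℂ)) 0 2 * UG ((q:ℂ)) 1 0))) :=
    patB ((q:ℂ)) _ _ _ _ _ _ (UG_col ((q:ℂ)) 1 2 2 (by decide))
      (UG_qcomm ((q:ℂ)) 0 2 0 2 (by decide) (by decide))
      (UG_qcomm ((q:ℂ)) 1 2 0 2 (by decide) (by decide))
      (UG_col ((q:ℂ)) 0 2 2 (by decide))
      (UG_comm ((q:ℂ)) 1 2 0 2 (by decide) (by decide)).symm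
  have key20 : (UG ((q:ℂ)) 0 0 * UG ((q:ℂ)) 1 1 - ((q:ℂ)) • (UG ((q:ℂ)) 0 1 * UG ((q:ℂ)) 1 0)) * UG ((q:ℂ)) 2 0
      = ((q:ℂ)) • (UG ((q:ℂ)) 2 0 * (UG ((q:ℂ)) 0 0 * UG ((q:ℂ)) 1 1 - ((q:ℂ)) • (UG ((q:ℂ)) 0 1 * UG ((q:ℂ)) 1 0))) :=
    patA ((q:ℂ)) _ _ _ _ _ (UG_comm ((q:ℂ)) 1 2 0 1 (by decide) (by decide))
      (UG_col ((q:ℂ)) 0 2 0 (by decide)) (UG_col ((q:ℂ)) 1 2 0 (by decide))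
      (UG_comm ((q:ℂ)) 0 2 0 1 (by decide) (by decide))
  have key21 : (UG ((q:ℂ)) 0 0 * UG ((q:ℂ)) 1 1 - ((q:ℂ)) • (UG ((q:ℂ)) 0 1 * UG ((q:ℂ)) 1 0)) * UG ((q:ℂ)) 2 1
      = ((q:ℂ)) • (UG ((q:ℂ)) 2 1 * (UG ((q:ℂ)) 0 0 * UG ((q:ℂ)) 1 1 - ((q:ℂ)) • (UG ((q:ℂ)) 0 1 * UG ((q:ℂ)) 1 0))) :=
    patB ((q:ℂ)) _ _ _ _ _ _ (UG_col ((q:ℂ)) 1 2 1 (by decide))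
      (UG_qcomm ((q:ℂ)) 0 2 0 1 (by decide) (by decide))
      (UG_qcomm ((q:ℂ)) 1 2 0 1 (by decide) (by decide))
      (UG_col ((q:ℂ)) 0 2 1 (by decide))
      (UG_comm ((q:ℂ)) 1 2 0 1 (by decide) (by decide)).symm
  have key00 : (UG ((q:ℂ)) 0 1 * UG ((q:ℂ)) 1 2 - ((q:ℂ)) • (UG ((q:ℂ)) 0 2 * UG ((q:ℂ)) 1 1)) * UG ((q:ℂ)) 2 0
      = UG ((q:ℂ)) 2 0 * (UG ((q:ℂ)) 0 1 * UG ((q:ℂ)) 1 2 - ((q:ℂ)) • (UG ((q:ℂ)) 0 2 * UG ((q:ℂ)) 1 1)) :=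
    patC ((q:ℂ)) _ _ _ _ _ (UG_comm ((q:ℂ)) 1 2 0 2 (by decide) (by decide))
      (UG_comm ((q:ℂ)) 0 2 0 1 (by decide) (by decide))
      (UG_comm ((q:ℂ)) 1 2 0 1 (by decide) (by decide))
      (UG_comm ((q:ℂ)) 0 2 0 2 (by decide) (by decide))
  -- the mixed products, with scalars
  have m01 : zs 0 * z 1 = ((q:ℂ)) • (z 1 * zs 0) := by
    rw [hz' 1, ezs0, smul_mul_assoc, key01, mul_smul_comm, smul_comm]
  have m02 : zs 0 * z 2 = ((q:ℂ)) • (z 2 * zs 0) := by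
    rw [hz' 2, ezs0, smul_mul_assoc, key02, mul_smul_comm, smul_comm]
  have m10 : zs 1 * z 0 = ((q:ℂ)) • (z 0 * zs 1) := by
    rw [hz' 0, ezs1, smul_mul_assoc, key10, mul_smul_comm, smul_comm]
  have m12 : zs 1 * z 2 = ((q:ℂ)) • (z 2 * zs 1) := by
    rw [hz' 2, ezs1, smul_mul_assoc, key12, mul_smul_comm, smul_comm]
  have m20 : zs 2 * z 0 = ((q:ℂ)) • (z 0 * zs 2) := by
    rw [hz' 0, ezs2, key20]
  have m21 : zs 2 * z 1 = ((q:ℂ)) • (z 1 * zs 2) := by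
    rw [hz' 1, ezs2, key21]
  refine ⟨?_, ?_, ?_, ?_, ?_⟩
  · intro i j hij
    rw [hz' i, hz' j]
    exact UG_row ((q:ℂ)) i j 2 hij
  · intro i j hij
    fin_cases i <;> fin_cases j
    · exact absurd rfl hij
    · exact m01
    · exact m02
    · exact m10
    · exact absurd rfl hij
    · exact m12
    · exact m20
    · exact m21
    · exact absurd rfl hij
  · rw [hz' 0, ezs0, smul_mul_assoc, key00, mul_smul_comm]
  · have keyD : (UG ((q:ℂ)) 0 0 * UG ((q:ℂ)) 1 2 - ((q:ℂ)) • (UG ((q:ℂ)) 0 2 * UG ((q:ℂ)) 1 0)) * UG ((q:ℂ)) 2 1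
        - UG ((q:ℂ)) 2 1 * (UG ((q:ℂ)) 0 0 * UG ((q:ℂ)) 1 2 - ((q:ℂ)) • (UG ((q:ℂ)) 0 2 * UG ((q:ℂ)) 1 0))
        = (((q:ℂ)) - ((q:ℂ))⁻¹) • ((UG ((q:ℂ)) 0 1 * UG ((q:ℂ)) 1 2 - ((q:ℂ)) • (UG ((q:ℂ)) 0 2 * UG ((q:ℂ)) 1 1)) * UG ((q:ℂ)) 2 0) :=
      patD ((q:ℂ)) _ _ _ _ _ _ _ _ (UG_comm ((q:ℂ)) 1 2 1 2 (by decide) (by decide))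
        (UG_qcomm ((q:ℂ)) 0 2 0 1 (by decide) (by decide))
        (UG_qcomm ((q:ℂ)) 1 2 0 1 (by decide) (by decide))
        (UG_comm ((q:ℂ)) 0 2 1 2 (by decide) (by decide))
        (UG_comm ((q:ℂ)) 1 2 0 2 (by decide) (by decide)).symm
    have kd2 : (UG ((q:ℂ)) 0 0 * UG ((q:ℂ)) 1 2 - ((q:ℂ)) • (UG ((q:ℂ)) 0 2 * UG ((q:ℂ)) 1 0)) * UG ((q:ℂ)) 2 1
        = UG ((q:ℂ)) 2 1 * (UG ((q:ℂ)) 0 0 * UG ((q:ℂ)) 1 2 - ((q:ℂ)) • (UG ((q:ℂ)) 0 2 * UG ((q:ℂ)) 1 0))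
          + (((q:ℂ)) - ((q:ℂ))⁻¹) • (UG ((q:ℂ)) 2 0 * (UG ((q:ℂ)) 0 1 * UG ((q:ℂ)) 1 2 - ((q:ℂ)) • (UG ((q:ℂ)) 0 2 * UG ((q:ℂ)) 1 1))) := by
      rw [← key00]
      exact sub_eq_iff_eq_add'.mp keyD
    rw [hz' 1, hz' 0, ezs1, ezs0, smul_mul_assoc, mul_smul_comm, kd2]
    simp only [mul_smul_comm]
    simp only [smul_add, smul_sub, smul_smul]
    match_scalars <;> (field_simp; try ring)
  · have keyE : (UG ((q:ℂ)) 0 0 * UG ((q:ℂ)) 1 1 - ((q:ℂ)) • (UG ((q:ℂ)) 0 1 * UG ((q:ℂ)) 1 0)) * UG ((q:ℂ)) 2 2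
        - UG ((q:ℂ)) 2 2 * (UG ((q:ℂ)) 0 0 * UG ((q:ℂ)) 1 1 - ((q:ℂ)) • (UG ((q:ℂ)) 0 1 * UG ((q:ℂ)) 1 0))
        = (((q:ℂ)) - ((q:ℂ))⁻¹) • (UG ((q:ℂ)) 2 1 * (UG ((q:ℂ)) 0 0 * UG ((q:ℂ)) 1 2 - ((q:ℂ)) • (UG ((q:ℂ)) 0 2 * UG ((q:ℂ)) 1 0))
            - ((q:ℂ))⁻¹ • (UG ((q:ℂ)) 2 0 * (UG ((q:ℂ)) 0 1 * UG ((q:ℂ)) 1 2 - ((q:ℂ)) • (UG ((q:ℂ)) 0 2 * UG ((q:ℂ)) 1 1)))) :=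
      patE ((q:ℂ)) hQ _ _ _ _ _ _ _ _ _
        (UG_qcomm ((q:ℂ)) 1 2 1 2 (by decide) (by decide))
        (UG_qcomm ((q:ℂ)) 0 2 0 2 (by decide) (by decide))
        (UG_qcomm ((q:ℂ)) 1 2 0 2 (by decide) (by decide))
        (UG_qcomm ((q:ℂ)) 0 2 1 2 (by decide) (by decide))
        (UG_qcomm ((q:ℂ)) 0 2 0 1 (by decide) (by decide))
        (UG_comm ((q:ℂ)) 1 2 1 2 (by decide) (by decide))
        (UG_comm ((q:ℂ)) 0 2 0 2 (by decide) (by decide))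
        (UG_comm ((q:ℂ)) 0 2 1 2 (by decide) (by decide))
        (UG_comm ((q:ℂ)) 1 2 0 2 (by decide) (by decide))
        (UG_comm ((q:ℂ)) 0 2 0 1 (by decide) (by decide))
    rw [hz' 2, hz' 1, hz' 0, ezs2, ezs1, ezs0, keyE]
    simp only [mul_smul_comm]
    simp only [smul_add, smul_sub, smul_smul]
    match_scalars <;> (field_simp; try ring)
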